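/- arXiv:1809.08507 — 2 statements merged into one kernel-verified Lean document; each statement's English description precedes it below -/
import Mathlib

section
/- For 1 ≤ m ≤ 2k+1, the vertex-isoperimetric number of the hypercube satisfies b_v(m, Q_{2k}) = 1 + (m/2)(4k − m − 1), i.e., the minimum over all m-element vertex sets S of Q_{2k} of |N(S)| equals 1 + m(4k−m−1)/2. -/
open Finset

variable {V : Type*} [Fintype V] [DecidableEq V]

/-- Out-degree of `v` in the digraph given by `D`. -/
def outDeg (D : V → V → Bool) (v : V) : ℕ :=
  (Finset.univ.filter (fun w => D v w = true)).card

/-- In-degree of `v` in the digraph given by `D`. -/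
def inDeg (D : V → V → Bool) (v : V) : ℕ :=
  (Finset.univ.filter (fun w => D w v = true)).card

/-- `D` is an orientation of the simple graph `G`: every arc of `D` is an edge of `G`,
and every edge of `G` receives exactly one of the two directions. -/
def IsOrientation (G : SimpleGraph V) (D : V → V → Bool) : Prop :=
  (∀ v w, D v w = true → G.Adj v w) ∧ ∀ v w, G.Adj v w → (D v w = true ↔ D w v = false)

/-- An Eulerian orientation: an orientation with in-degree equal to out-degree everywhere. -/
def IsEulerianOrientation (G : SimpleGraph V) (D : V → V → Bool) : Prop :=
  IsOrientation G D ∧ ∀ v, inDeg D v = outDeg D v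

/-- Number of arcs of `D` going from `A` to `B`. -/
def arcs (D : V → V → Bool) (A B : Finset V) : ℕ :=
  ((A ×ˢ B).filter (fun p => D p.1 p.2 = true)).card

/-- The digraph `D` is strongly connected on the vertex set `A`. -/
def StronglyConnectedOn (D : V → V → Bool) (A : Finset V) : Prop :=
  ∀ v ∈ A, ∀ w ∈ A,
    Relation.ReflTransGen (fun a b => a ∈ A ∧ b ∈ A ∧ D a b = true) v w

/-- The digraph `D` is strongly `k`-vertex-connected: it has at least `k+1` vertices and
deleting any set of at most `k-1` vertices leaves a strongly connected digraph. -/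
def StronglyKConnected (k : ℕ) (D : V → V → Bool) : Prop :=
  k + 1 ≤ Fintype.card V ∧
    ∀ Z : Finset V, Z.card ≤ k - 1 → StronglyConnectedOn D (Finset.univ \ Z)

/-- The `d`-dimensional hypercube graph on vertex set `Fin d → Bool`. -/
def cube (d : ℕ) : SimpleGraph (Fin d → Bool) where
  Adj v w := (Finset.univ.filter (fun i => v i ≠ w i)).card = 1
  symm := by
    constructor
    intro v w h
    beta_reduce at h ⊢
    have he : (Finset.univ.filter (fun i => w i ≠ v i))
        = (Finset.univ.filter (fun i => v i ≠ w i)) := by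
      apply Finset.filter_congr; intro i _; simp [ne_comm]
    rw [he]; exact h
  loopless := by constructor; intro v h; simp at h

/-- Number of external neighbors of the vertex set `S` in `G`. -/
noncomputable def extNbrCard (G : SimpleGraph V) (S : Finset V) : ℕ :=
  {w | w ∉ S ∧ ∃ v ∈ S, G.Adj v w}.ncard

/-- Harper's vertex-isoperimetric quantity `b_v(m, Q_{2k})`: the minimum number of external
neighbors over all vertex sets of size `m` in the hypercube `Q_{2k}`. -/
noncomputable def bv (k m : ℕ) : ℕ :=
  sInf {n | ∃ S : Finset (Fin (2 * k) → Bool), S.card = m ∧ extNbrCard (cube (2 * k)) S = n}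


-- ====== auxiliary development ======

instance cubeAdjDec (n : ℕ) : DecidableRel (cube n).Adj := fun _ _ => Nat.decEq _ _

/-- external neighbourhood as a Finset -/
def bdry (n : ℕ) (S : Finset (Fin n → Bool)) : Finset (Fin n → Bool) :=
  univ.filter (fun w => w ∉ S ∧ ∃ v ∈ S, (cube n).Adj v w)

def Fval (n m : ℕ) : ℕ := m * (n + 1 - m) + (m - 1) * (m - 2) / 2

def ins {n : ℕ} (i : Fin (n+1)) (b : Bool) (x : Fin n → Bool) : Fin (n+1) → Bool :=
  Fin.insertNth (α := fun _ => Bool) i b x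

@[simp] lemma ins_same {n : ℕ} (i : Fin (n+1)) (b : Bool) (x : Fin n → Bool) : ins i b x i = b :=
  Fin.insertNth_apply_same (α := fun _ => Bool) i b x

@[simp] lemma ins_succAbove {n : ℕ} (i : Fin (n+1)) (b : Bool) (x : Fin n → Bool) (j : Fin n) :
    ins i b x (i.succAbove j) = x j :=
  Fin.insertNth_apply_succAbove (α := fun _ => Bool) i b x j

lemma ins_inj {n : ℕ} (i : Fin (n+1)) (b : Bool) : Function.Injective (ins i b) := by
  intro x y h
  funext j
  have := congrFun h (i.succAbove j)
  simpa using this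

lemma ins_self {n : ℕ} (i : Fin (n+1)) (v : Fin (n+1) → Bool) :
    ins i (v i) (fun j => v (i.succAbove j)) = v :=
  Fin.insertNth_self_removeNth (α := fun _ => Bool) i v

lemma card_filter_succAbove {n : ℕ} (i : Fin (n+1)) (P : Fin (n+1) → Prop) [DecidablePred P] :
    (univ.filter P).card
      = (univ.filter (fun j : Fin n => P (i.succAbove j))).card + (if P i then 1 else 0) := by
  have huniv : (univ : Finset (Fin (n+1))) = insert i (univ.image i.succAbove) := by
    ext j
    simp only [mem_univ, true_iff, mem_insert, mem_image]
    by_cases h : j = i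
    · left; exact h
    · right; obtain ⟨k, hk⟩ := Fin.exists_succAbove_eq h; exact ⟨k, trivial, hk⟩
  have hni : i ∉ univ.image i.succAbove := by
    simp only [mem_image, not_exists]
    rintro k ⟨-, hk⟩
    exact absurd hk (Fin.succAbove_ne i k)
  rw [huniv, filter_insert]
  have himg : ((univ.image i.succAbove).filter P).card
      = (univ.filter (fun j : Fin n => P (i.succAbove j))).card := by
    rw [Finset.filter_image]
    exact Finset.card_image_of_injective _ (Fin.succAbove_right_injective)
  by_cases hP : P i
  · rw [if_pos hP, if_pos hP, card_insert_of_notMem (fun h => hni (filter_subset _ _ h)), himg]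
  · rw [if_neg hP, if_neg hP, himg, Nat.add_zero]

lemma cube_adj_ins {n : ℕ} (i : Fin (n+1)) (b : Bool) {x y : Fin n → Bool}
    (h : (cube n).Adj x y) :
    (cube (n+1)).Adj (ins i b x) (ins i b y) := by
  change (univ.filter (fun j => ins i b x j ≠ ins i b y j)).card = 1
  rw [card_filter_succAbove i]
  simp only [ins_same, ins_succAbove, ne_eq, not_true_eq_false, if_false]
  exact h

lemma cube_singleton_bdry {n : ℕ} (v : Fin n → Bool) :
    (bdry n {v}).card = n := by
  have hset : bdry n {v}
      = univ.image (fun j : Fin n => Function.update v j (!v j)) := by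
    ext w
    unfold bdry
    simp only [mem_filter, mem_univ, true_and, mem_singleton, mem_image, Finset.mem_singleton,
      exists_eq_left, exists_true_left]
    constructor
    · rintro ⟨hw, hadj⟩
      have h1 : (univ.filter (fun i => v i ≠ w i)).card = 1 := hadj
      obtain ⟨j, hj⟩ := Finset.card_eq_one.mp h1
      refine ⟨j, ?_⟩
      have hjmem : j ∈ univ.filter (fun i => v i ≠ w i) := hj ▸ mem_singleton_self j
      have hjne : v j ≠ w j := (mem_filter.mp hjmem).2
      funext l
      by_cases hl : l = j
      · subst hl
        rw [Function.update_self]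
        cases hv : v l <;> cases hw' : w l <;> simp_all
      · rw [Function.update_of_ne hl]
        by_contra hne
        have : l ∈ univ.filter (fun i => v i ≠ w i) := mem_filter.mpr ⟨mem_univ l, fun h => hne h⟩
        rw [hj, mem_singleton] at this
        exact hl this
    · rintro ⟨j, rfl⟩
      constructor
      · intro h
        have := congrFun h j
        rw [Function.update_self] at this
        cases hv : v j <;> simp [hv] at this
      · show (univ.filter (fun i => v i ≠ Function.update v j (!v j) i)).card = 1
        have : (univ.filter (fun i => v i ≠ Function.update v j (!v j) i)) = {j} := by
          ext l
          simp only [mem_filter, mem_univ, true_and, mem_singleton]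
          by_cases hl : l = j
          · subst hl
            simp only [Function.update_self, iff_true]
            cases v l <;> simp
          · rw [Function.update_of_ne hl]
            simp [hl]
        rw [this, card_singleton]
  rw [hset, Finset.card_image_of_injective, card_univ, Fintype.card_fin]
  intro a b hab
  by_contra hne
  have hab' : Function.update v a (!v a) = Function.update v b (!v b) := hab
  have := congrFun hab' a
  rw [Function.update_self, Function.update_of_ne (fun h : a = b => hne h)] at this
  cases v a <;> simp at this

/-- the slc of `S` at value `b` of coordinate `i` -/
def slc {n : ℕ} (i : Fin (n+1)) (b : Bool) (S : Finset (Fin (n+1) → Bool)) :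
    Finset (Fin n → Bool) :=
  univ.filter (fun x => ins i b x ∈ S)

@[simp] lemma mem_slc {n : ℕ} {i : Fin (n+1)} {b : Bool} {S : Finset (Fin (n+1) → Bool)}
    {x : Fin n → Bool} : x ∈ slc i b S ↔ ins i b x ∈ S := by
  simp [slc]

lemma card_slc_add {n : ℕ} (i : Fin (n+1)) (S : Finset (Fin (n+1) → Bool)) :
    (slc i false S).card + (slc i true S).card = S.card := by
  have hb : ∀ b : Bool, (slc i b S).card = (S.filter (fun v => v i = b)).card := by
    intro b
    apply Finset.card_bij (fun x _ => ins i b x)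
    · intro x hx
      rw [mem_filter]
      exact ⟨mem_slc.mp hx, ins_same i b x⟩
    · intro x _ y _ h
      exact ins_inj i b h
    · intro v hv
      obtain ⟨hvS, hvi⟩ := mem_filter.mp hv
      refine ⟨fun j => v (i.succAbove j), ?_, ?_⟩
      · rw [mem_slc]
        rw [show (ins i b fun j => v (i.succAbove j)) = v from hvi ▸ ins_self i v]
        exact hvS
      · exact (hvi ▸ ins_self i v)
  rw [hb, hb]
  have := Finset.card_filter_add_card_filter_not (s := S) (p := fun v => v i = false)
  simp only [Bool.not_eq_false] at this
  exact this

lemma bdry_slc_le {n : ℕ} (i : Fin (n+1)) (S : Finset (Fin (n+1) → Bool)) :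
    (bdry n (slc i false S)).card + (bdry n (slc i true S)).card ≤ (bdry (n+1) S).card := by
  have himg : ∀ b : Bool, (bdry n (slc i b S)).image (ins i b) ⊆ bdry (n+1) S := by
    intro b x hx
    obtain ⟨x0, hx0, rfl⟩ := mem_image.mp hx
    obtain ⟨-, hx0nS, y, hyS, hadj⟩ := mem_filter.mp hx0
    rw [bdry, mem_filter]
    refine ⟨mem_univ _, ?_, ins i b y, ?_, cube_adj_ins i b hadj⟩
    · intro hmem
      exact hx0nS (mem_slc.mpr hmem)
    · exact mem_slc.mp hyS
  have hdisj : Disjoint ((bdry n (slc i false S)).image (ins i false))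
      ((bdry n (slc i true S)).image (ins i true)) := by
    rw [Finset.disjoint_left]
    intro w hw0 hw1
    obtain ⟨x, -, rfl⟩ := mem_image.mp hw0
    obtain ⟨y, -, hy⟩ := mem_image.mp hw1
    have := congrFun hy i
    simp only [ins_same] at this
    exact Bool.noConfusion this
  calc (bdry n (slc i false S)).card + (bdry n (slc i true S)).card
      = ((bdry n (slc i false S)).image (ins i false)).card
        + ((bdry n (slc i true S)).image (ins i true)).card := by
        rw [Finset.card_image_of_injective _ (ins_inj i false),
          Finset.card_image_of_injective _ (ins_inj i true)]
    _ = (((bdry n (slc i false S)).image (ins i false))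
        ∪ ((bdry n (slc i true S)).image (ins i true))).card := by
        rw [Finset.card_union_of_disjoint hdisj]
    _ ≤ (bdry (n+1) S).card := by
        apply Finset.card_le_card
        exact Finset.union_subset (himg false) (himg true)

lemma two_dvd_pred_mul (m : ℕ) : 2 ∣ (m - 1) * (m - 2) := by
  match m with
  | 0 => simp
  | 1 => simp
  | (m+2) =>
    show 2 ∣ (m+1) * m
    rw [Nat.mul_comm]
    exact (Nat.even_mul_succ_self m).two_dvd

lemma two_mul_Fval (n m : ℕ) : 2 * Fval n m = 2 * (m * (n + 1 - m)) + (m - 1) * (m - 2) := by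
  unfold Fval
  rw [Nat.mul_add, Nat.mul_div_cancel' (two_dvd_pred_mul m)]

lemma cast_pm (m : ℕ) (hm : 1 ≤ m) :
    (((m - 1) * (m - 2) : ℕ) : ℤ) = ((m:ℤ) - 1) * ((m:ℤ) - 2) := by
  match m, hm with
  | 1, _ => norm_num
  | (m+2), _ =>
    show (((m + 1) * m : ℕ) : ℤ) = _
    push_cast
    ring

lemma Fval_cast (n m : ℕ) (h : m ≤ n + 1) (hm : 1 ≤ m) :
    (2 * Fval n m : ℤ) = 2 * m * ((n:ℤ) + 1 - m) + ((m:ℤ) - 1) * ((m:ℤ) - 2) := by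
  have h0 : ((2 * Fval n m : ℕ) : ℤ)
      = ((2 * (m * (n + 1 - m)) : ℕ) : ℤ) + (((m - 1) * (m - 2) : ℕ) : ℤ) := by
    rw [← Nat.cast_add]
    exact congrArg (fun t : ℕ => (t : ℤ)) (two_mul_Fval n m)
  rw [cast_pm m hm] at h0
  push_cast [Nat.cast_sub h] at h0
  rw [h0]
  ring

lemma Fval_super {n a b : ℕ} (ha : 1 ≤ a) (hb : 1 ≤ b) (hab : a + b ≤ n + 2) :
    Fval (n+1) (a+b) ≤ Fval n a + Fval n b := by
  have h1 : a ≤ n + 1 := by omega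
  have h2 : b ≤ n + 1 := by omega
  have h1' : (1:ℤ) ≤ (a:ℤ) := by exact_mod_cast ha
  have h2' : (1:ℤ) ≤ (b:ℤ) := by exact_mod_cast hb
  have hZ : (2 * Fval (n+1) (a+b) : ℤ) ≤ 2 * Fval n a + 2 * Fval n b := by
    rw [Fval_cast (n+1) (a+b) (by omega) (by omega), Fval_cast n a h1 ha,
      Fval_cast n b h2 hb]
    push_cast
    nlinarith [mul_nonneg (by linarith : (0:ℤ) ≤ (a:ℤ) - 1) (by linarith : (0:ℤ) ≤ (b:ℤ) - 1)]
  have hN : 2 * Fval (n+1) (a+b) ≤ 2 * Fval n a + 2 * Fval n b := by exact_mod_cast hZ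
  omega

theorem cube_lower_bound : ∀ n : ℕ, ∀ S : Finset (Fin n → Bool),
    S.card ≤ n + 1 → Fval n S.card ≤ (bdry n S).card := by
  intro n
  induction n with
  | zero =>
    intro S hS
    rcases Nat.le_one_iff_eq_zero_or_eq_one.mp hS with h | h <;> rw [h] <;>
      simp [Fval]
  | succ n ih =>
    intro S hS
    rcases Nat.lt_or_ge S.card 2 with h2 | h2
    · rcases (by omega : S.card = 0 ∨ S.card = 1) with h | h
      · rw [h]; simp [Fval]
      · obtain ⟨v, rfl⟩ := Finset.card_eq_one.mp h
        rw [cube_singleton_bdry, h]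
        show 1 * (n + 1 + 1 - 1) + (1 - 1) * (1 - 2) / 2 ≤ n + 1
        simp
    · obtain ⟨u, huS, v, hvS, huv⟩ := Finset.one_lt_card.mp h2
      obtain ⟨i, hi⟩ := Function.ne_iff.mp huv
      have hne : ∀ b : Bool, (slc i b S).Nonempty := by
        intro b
        by_cases hu : u i = b
        · refine ⟨fun j => u (i.succAbove j), mem_slc.mpr ?_⟩
          rw [← hu, ins_self i u]; exact huS
        · have hv : v i = b := by
            cases b <;> cases hvv : v i <;> cases huu : u i <;> simp_all
          refine ⟨fun j => v (i.succAbove j), mem_slc.mpr ?_⟩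
          rw [← hv, ins_self i v]; exact hvS
      have hcard := card_slc_add i S
      have hc0 : 1 ≤ (slc i false S).card := Finset.card_pos.mpr (hne false)
      have hc1 : 1 ≤ (slc i true S).card := Finset.card_pos.mpr (hne true)
      calc Fval (n+1) S.card
          = Fval (n+1) ((slc i false S).card + (slc i true S).card) := by rw [hcard]
        _ ≤ Fval n (slc i false S).card + Fval n (slc i true S).card :=
            Fval_super hc0 hc1 (by omega)
        _ ≤ (bdry n (slc i false S)).card + (bdry n (slc i true S)).card := by
            gcongr
            · exact ih _ (by omega)
            · exact ih _ (by omega)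
        _ ≤ (bdry (n+1) S).card := bdry_slc_le i S

/-- characteristic vector of a finset of coordinates -/
def chi {n : ℕ} (A : Finset (Fin n)) : Fin n → Bool := fun j => decide (j ∈ A)

lemma chi_filter_ne {n : ℕ} (A B : Finset (Fin n)) :
    univ.filter (fun j => chi A j ≠ chi B j) = symmDiff A B := by
  ext j
  simp only [mem_filter, mem_univ, true_and, Finset.mem_symmDiff, chi]
  by_cases hA : j ∈ A <;> by_cases hB : j ∈ B <;> simp [hA, hB]

lemma cube_adj_chi {n : ℕ} (A B : Finset (Fin n)) :
    (cube n).Adj (chi A) (chi B) ↔ (symmDiff A B).card = 1 := by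
  show (univ.filter (fun j => chi A j ≠ chi B j)).card = 1 ↔ _
  rw [chi_filter_ne]

lemma chi_inj {n : ℕ} : Function.Injective (chi (n := n)) := by
  intro A B h
  ext j
  have := congrFun h j
  simp only [chi, decide_eq_decide] at this
  exact this

lemma chi_surj {n : ℕ} (x : Fin n → Bool) : chi (univ.filter (fun j => x j = true)) = x := by
  funext j
  simp only [chi, mem_filter, mem_univ, true_and]
  cases h : x j <;> simp [h]

section star
variable (n t : ℕ) (ht : t ≤ n)

def Lo (n t : ℕ) : Finset (Fin n) := univ.filter (fun j => (j : ℕ) < t)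
def Hi (n t : ℕ) : Finset (Fin n) := univ.filter (fun j => t ≤ (j : ℕ))

lemma card_Lo (h : t ≤ n) : (Lo n t).card = t := by
  have him : (Lo n t).image (fun j : Fin n => (j : ℕ)) = range t := by
    ext a
    simp only [mem_image, mem_range, Lo, mem_filter, mem_univ, true_and]
    constructor
    · rintro ⟨j, hj, rfl⟩; exact hj
    · intro ha; exact ⟨⟨a, lt_of_lt_of_le ha h⟩, ha, rfl⟩
  have := Finset.card_image_of_injective (Lo n t) (Fin.val_injective)
  rw [him, card_range] at this
  omega

lemma card_Hi (h : t ≤ n) : (Hi n t).card = n - t := by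
  have := Finset.card_filter_add_card_filter_not (s := (univ : Finset (Fin n)))
    (p := fun j => (j : ℕ) < t)
  simp only [not_lt, card_univ, Fintype.card_fin] at this
  have hL : (Lo n t).card = t := card_Lo n t h
  rw [Lo] at hL
  rw [Hi]
  omega

def starSet (n t : ℕ) : Finset (Fin n → Bool) :=
  insert (chi ∅) (((Lo n t).image (fun j => ({j} : Finset (Fin n)))).image chi)

lemma card_starSet (h : t ≤ n) : (starSet n t).card = t + 1 := by
  rw [starSet, Finset.card_insert_of_notMem, Finset.card_image_of_injective _ chi_inj,
    Finset.card_image_of_injective, card_Lo n t h]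
  · intro a b hab
    exact Finset.singleton_injective hab
  · intro hmem
    obtain ⟨A, hA, hAe⟩ := mem_image.mp hmem
    obtain ⟨j, hj, rfl⟩ := mem_image.mp hA
    have h0 : ({j} : Finset (Fin n)) = ∅ := chi_inj hAe
    simp at h0

def Bnd (n t : ℕ) : Finset (Finset (Fin n)) :=
  (Hi n t).image (fun j => ({j} : Finset (Fin n)))
    ∪ ((univ.powersetCard 2) \ ((Hi n t).powersetCard 2))

lemma symmDiff_empty_left {n : ℕ} (W : Finset (Fin n)) : symmDiff (∅ : Finset (Fin n)) W = W := by
  ext j; simp [Finset.mem_symmDiff]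

lemma symmDiff_singletons {n : ℕ} {j c : Fin n} (h : c ≠ j) :
    symmDiff ({j} : Finset (Fin n)) ({c} : Finset (Fin n)) = {j, c} := by
  ext l
  simp only [Finset.mem_symmDiff, mem_singleton, mem_insert]
  constructor
  · rintro (⟨rfl, -⟩ | ⟨rfl, -⟩)
    · left; rfl
    · right; rfl
  · rintro (rfl | rfl)
    · exact Or.inl ⟨rfl, fun hc => h hc.symm⟩
    · exact Or.inr ⟨rfl, fun hc => h hc⟩

lemma bdry_star_subset (h : t ≤ n) :
    bdry n (starSet n t) ⊆ (Bnd n t).image chi := by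
  intro w hw
  obtain ⟨-, hwnS, v, hvS, hadj⟩ := mem_filter.mp hw
  set W := univ.filter (fun j => w j = true) with hWdef
  have hwchi : chi W = w := chi_surj w
  rw [← hwchi] at hadj hwnS
  rw [← hwchi]
  clear hwchi hw
  rw [starSet, mem_insert] at hvS
  rcases hvS with hv0 | hvj
  · -- v = chi ∅
    rw [hv0] at hadj
    rw [cube_adj_chi] at hadj
    rw [symmDiff_empty_left] at hadj
    obtain ⟨l, hl⟩ := Finset.card_eq_one.mp hadj
    rcases Nat.lt_or_ge (l : ℕ) t with hlt | hge
    · exfalso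
      apply hwnS
      rw [hl, starSet]
      apply mem_insert_of_mem
      exact mem_image.mpr ⟨{l}, mem_image.mpr ⟨l, by simp [Lo, hlt], rfl⟩, rfl⟩
    · apply mem_image.mpr
      refine ⟨W, ?_, rfl⟩
      rw [Bnd]
      apply mem_union_left
      exact mem_image.mpr ⟨l, by simp [Hi, hge], hl.symm⟩
  · -- v = chi {j}
    obtain ⟨A, hA, hAv⟩ := mem_image.mp hvj
    obtain ⟨j, hjLo, rfl⟩ := mem_image.mp hA
    rw [← hAv, cube_adj_chi] at hadj
    obtain ⟨c, hc⟩ := Finset.card_eq_one.mp hadj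
    have hW : W = symmDiff ({j} : Finset (Fin n)) {c} := by
      have := congrArg (fun X => symmDiff ({j} : Finset (Fin n)) X) hc
      simpa [symmDiff_symmDiff_cancel_left] using this
    by_cases hcj : c = j
    · exfalso
      apply hwnS
      rw [hW, hcj, symmDiff_self]
      exact mem_insert_self _ _
    · have hW2 : W = {j, c} := by rw [hW, symmDiff_singletons hcj]
      apply mem_image.mpr
      refine ⟨W, ?_, rfl⟩
      rw [Bnd]
      apply mem_union_right
      rw [mem_sdiff]
      constructor
      · rw [Finset.mem_powersetCard]
        refine ⟨subset_univ _, ?_⟩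
        rw [hW2, Finset.card_insert_of_notMem (by simp only [mem_singleton]; exact fun hh => hcj hh.symm), card_singleton]
      · rw [Finset.mem_powersetCard]
        rintro ⟨hsub, -⟩
        have hjHi : j ∈ Hi n t := hsub (by rw [hW2]; exact mem_insert_self _ _)
        have hjLo' : (j : ℕ) < t := by
          have := mem_filter.mp hjLo
          exact this.2
        have := (mem_filter.mp hjHi).2
        omega

lemma choose_two_add (a t : ℕ) : (a + t).choose 2 = a.choose 2 + a * t + t.choose 2 := by
  induction t with
  | zero => simp
  | succ t ih =>
    have hp : ∀ x : ℕ, (x + 1).choose 2 = x + x.choose 2 := by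
      intro x
      rw [Nat.choose_succ_succ, Nat.choose_one_right]
    rw [show a + (t + 1) = (a + t) + 1 from rfl, hp, ih, hp, Nat.mul_succ]
    ring

lemma count_le (h : t ≤ n) :
    (n - t) + (Nat.choose n 2 - Nat.choose (n - t) 2) = Fval n (t + 1) := by
  obtain ⟨a, rfl⟩ : ∃ a, n = a + t := ⟨n - t, by omega⟩
  have ha : a + t - t = a := by omega
  rw [ha, choose_two_add a t]
  unfold Fval
  have h1 : a + t + 1 - (t + 1) = a := by omega
  have h2 : t + 1 - 1 = t := by omega
  have h3 : t + 1 - 2 = t - 1 := by omega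
  rw [h1, h2, h3]
  simp only [Nat.choose_two_right]
  have h5 : (t + 1) * a = a * t + a := by ring
  rw [h5]
  generalize t * (t - 1) / 2 = D
  generalize a * (a - 1) / 2 = C
  generalize a * t = E
  omega

lemma card_bdry_star_le (h : t ≤ n) :
    (bdry n (starSet n t)).card ≤ Fval n (t + 1) := by
  calc (bdry n (starSet n t)).card ≤ ((Bnd n t).image chi).card :=
        Finset.card_le_card (bdry_star_subset n t h)
    _ ≤ (Bnd n t).card := Finset.card_image_le
    _ ≤ ((Hi n t).image (fun j => ({j} : Finset (Fin n)))).card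
        + ((univ.powersetCard 2) \ ((Hi n t).powersetCard 2)).card := Finset.card_union_le _ _
    _ ≤ Fval n (t + 1) := by
        rw [Finset.card_image_of_injective _ Finset.singleton_injective, card_Hi n t h,
          Finset.card_sdiff_of_subset (Finset.powersetCard_mono (subset_univ _)),
          Finset.card_powersetCard, Finset.card_powersetCard, card_univ, Fintype.card_fin,
          card_Hi n t h]
        rw [count_le n t h]


lemma extNbr_eq_bdry (n : ℕ) (S : Finset (Fin n → Bool)) :
    extNbrCard (cube n) S = (bdry n S).card := by
  rw [extNbrCard]
  have hset : {w | w ∉ S ∧ ∃ v ∈ S, (cube n).Adj v w} = ↑(bdry n S) := by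
    ext w; simp [bdry]
  rw [hset, Set.ncard_coe_finset]


/-- For `1 ≤ m ≤ 2k+1`, `b_v(m, Q_{2k}) = 1 + (m/2)(4k - m - 1)`. -/
theorem stmt5 (k m : ℕ) (hk : 1 ≤ k) (hm1 : 1 ≤ m) (hm2 : m ≤ 2 * k + 1) :
    (bv k m : ℚ) = 1 + (m : ℚ) / 2 * (4 * k - m - 1) := by
  have ht : m - 1 ≤ 2 * k := by omega
  have hsucc : m - 1 + 1 = m := by omega
  have hwit_card : (starSet (2 * k) (m - 1)).card = m := by
    rw [card_starSet _ _ ht, hsucc]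
  have hlow : ∀ S : Finset (Fin (2 * k) → Bool), S.card = m →
      Fval (2 * k) m ≤ extNbrCard (cube (2 * k)) S := by
    intro S hS
    rw [extNbr_eq_bdry]
    have := cube_lower_bound (2 * k) S (by omega)
    rwa [hS] at this
  have hup : extNbrCard (cube (2 * k)) (starSet (2 * k) (m - 1)) ≤ Fval (2 * k) m := by
    rw [extNbr_eq_bdry]
    have := card_bdry_star_le (2 * k) (m - 1) ht
    rwa [hsucc] at this
  have hval : extNbrCard (cube (2 * k)) (starSet (2 * k) (m - 1)) = Fval (2 * k) m :=
    le_antisymm hup (hlow _ hwit_card)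
  have hbv : bv k m = Fval (2 * k) m := by
    apply le_antisymm
    · exact Nat.sInf_le ⟨starSet (2 * k) (m - 1), hwit_card, hval⟩
    · refine le_csInf ⟨Fval (2 * k) m, ?_⟩ ?_
      · exact ⟨starSet (2 * k) (m - 1), hwit_card, hval⟩
      · rintro b ⟨S, hS, rfl⟩
        exact hlow S hS
  rw [hbv]
  rcases eq_or_lt_of_le hm1 with h1 | h2
  · rw [← h1]
    show ((1 * (2 * k + 1 - 1) + (1 - 1) * (1 - 2) / 2 : ℕ) : ℚ) = 1 + (1 : ℚ) / 2 * (4 * k - 1 - 1)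
    have he : 1 * (2 * k + 1 - 1) + (1 - 1) * (1 - 2) / 2 = 2 * k := by omega
    rw [he]
    push_cast
    ring
  · have hm2' : 2 ≤ m := h2
    show ((m * (2 * k + 1 - m) + (m - 1) * (m - 2) / 2 : ℕ) : ℚ) = _
    rw [Nat.cast_add, Nat.cast_mul, Nat.cast_div (two_dvd_pred_mul m) (by norm_num), Nat.cast_mul,
      Nat.cast_sub (by omega : m ≤ 2 * k + 1), Nat.cast_sub (by omega : 1 ≤ m),
      Nat.cast_sub hm2']
    push_cast
    ring
end star
end

section
/- The hypercube Q_d is d-vertex-connected: for d ≥ 1, deleting any set of at most d−1 vertices from Q_d leaves a connected graph (with at least one vertex). -/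
open Finset

variable {V : Type*} [Fintype V] [DecidableEq V]

lemma cube_adj_iff {d : ℕ} (v w : Fin d → Bool) :
    (cube d).Adj v w ↔ ∃ i, w = Function.update v i (!v i) := by
  constructor
  · intro h
    obtain ⟨i, hi⟩ := Finset.card_eq_one.mp h
    have hvi : v i ≠ w i := by
      have : i ∈ Finset.univ.filter (fun j => v j ≠ w j) := by
        rw [hi]; exact Finset.mem_singleton_self i
      simpa using this
    refine ⟨i, funext fun j => ?_⟩
    by_cases hj : j = i
    · subst hj
      rw [Function.update_self]
      cases hv : v j <;> cases hw : w j <;> simp_all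
    · rw [Function.update_of_ne hj]
      by_contra hne
      have : j ∈ Finset.univ.filter (fun j => v j ≠ w j) := by
        simp [Ne.symm hne]
      rw [hi, Finset.mem_singleton] at this
      exact hj this
  · rintro ⟨i, rfl⟩
    show (Finset.univ.filter _).card = 1
    have : Finset.univ.filter (fun j => v j ≠ Function.update v i (!v i) j) = {i} := by
      ext j
      simp only [Finset.mem_filter, Finset.mem_univ, true_and, Finset.mem_singleton]
      constructor
      · intro h; by_contra hj; rw [Function.update_of_ne hj] at h; exact h rfl
      · rintro rfl; rw [Function.update_self]; cases v j <;> simp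
    rw [this, Finset.card_singleton]

lemma adj_update {d : ℕ} (v : Fin d → Bool) (i : Fin d) :
    (cube d).Adj v (Function.update v i (!v i)) :=
  (cube_adj_iff v _).mpr ⟨i, rfl⟩

lemma snoc_adj {d : ℕ} {x y : Fin d → Bool} (b : Bool) (h : (cube d).Adj x y) :
    (cube (d+1)).Adj (Fin.snoc x b) (Fin.snoc y b) := by
  obtain ⟨i, rfl⟩ := (cube_adj_iff x y).mp h
  rw [cube_adj_iff]
  refine ⟨i.castSucc, ?_⟩
  rw [Fin.snoc_update, Fin.snoc_castSucc]

lemma snoc_adj_last {d : ℕ} (x : Fin d → Bool) (b : Bool) :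
    (cube (d+1)).Adj (Fin.snoc x b) (Fin.snoc x (!b)) := by
  rw [cube_adj_iff]
  refine ⟨Fin.last d, ?_⟩
  funext j
  refine Fin.lastCases ?_ (fun i => ?_) j
  · rw [Function.update_self, Fin.snoc_last, Fin.snoc_last]
  · rw [Function.update_of_ne (Fin.castSucc_lt_last i).ne, Fin.snoc_castSucc, Fin.snoc_castSucc]

lemma cube_key : ∀ d : ℕ, 1 ≤ d → ∀ Z : Finset (Fin d → Bool), Z.card ≤ d - 1 →
    ∀ v ∉ Z, ∀ w ∉ Z,
    Relation.ReflTransGen (fun a b => a ∉ Z ∧ b ∉ Z ∧ (cube d).Adj a b) v w := by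
  intro d
  induction d with
  | zero => omega
  | succ d ih =>
    intro _ Z hZ v hv w hw
    rcases Nat.eq_zero_or_pos d with rfl | hd
    · -- base case d+1 = 1
      have hZe : Z = ∅ := Finset.card_eq_zero.mp (Nat.le_zero.mp hZ)
      subst hZe
      rcases eq_or_ne v w with rfl | hne
      · exact Relation.ReflTransGen.refl
      · refine Relation.ReflTransGen.single ⟨hv, hw, ?_⟩
        rw [cube_adj_iff]
        refine ⟨0, funext fun j => ?_⟩
        have hj : j = 0 := Fin.eq_zero j
        subst hj
        rw [Function.update_self]
        have h0 : v 0 ≠ w 0 := by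
          intro h; exact hne (funext fun j => by rw [Fin.eq_zero j]; exact h)
        cases hv0 : v 0 <;> cases hw0 : w 0 <;> simp_all
    · -- inductive step, d ≥ 1
      have hZd : Z.card ≤ d := by omega
      set Zb : Bool → Finset (Fin d → Bool) :=
        fun b => Finset.univ.filter (fun x => Fin.snoc x b ∈ Z) with hZbdef
      have hmemZb : ∀ b (x : Fin d → Bool), x ∈ Zb b ↔ Fin.snoc x b ∈ Z := by
        intro b x; simp [hZbdef]
      -- card of Zb
      have hcardZb : ∀ b, (Zb b).card = (Z.filter (fun z => z (Fin.last d) = b)).card := by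
        intro b
        refine Finset.card_bij (fun x _ => Fin.snoc x b) ?_ ?_ ?_
        · intro x hx
          rw [hmemZb] at hx
          simp [hx, Fin.snoc_last]
        · intro x1 _ x2 _ h
          have := congrArg Fin.init h
          rwa [Fin.init_snoc, Fin.init_snoc] at this
        · intro z hz
          rw [Finset.mem_filter] at hz
          refine ⟨Fin.init z, ?_, ?_⟩
          · rw [hmemZb, ← hz.2, Fin.snoc_init_self]; exact hz.1
          · show Fin.snoc (Fin.init z) b = z
            conv_lhs => rw [← hz.2]
            exact Fin.snoc_init_self z
      have hsum : (Zb true).card + (Zb false).card ≤ d := by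
        have h1 := Finset.card_filter_add_card_filter_not
          (s := Z) (fun z => z (Fin.last d) = true)
        have h2 : Z.filter (fun z => ¬ z (Fin.last d) = true)
            = Z.filter (fun z => z (Fin.last d) = false) := by
          apply Finset.filter_congr; intro z _; simp
        rw [hcardZb true, hcardZb false, ← h2, h1]
        exact hZd
      obtain ⟨b, hb⟩ : ∃ b : Bool, (Zb b).card ≤ d - 1 := by
        rcases Nat.le_total (Zb true).card (Zb false).card with h | h
        · exact ⟨true, by omega⟩
        · exact ⟨false, by omega⟩
      -- reach claim
      have reach : ∀ (x : Fin d → Bool) (c : Bool), Fin.snoc x c ∉ Z →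
          ∃ y, y ∉ Zb b ∧ Relation.ReflTransGen
            (fun a b' => a ∉ Z ∧ b' ∉ Z ∧ (cube (d+1)).Adj a b') (Fin.snoc x c) (Fin.snoc y b) := by
        intro x c hxc
        rcases eq_or_ne c b with rfl | hcb
        · exact ⟨x, by rw [hmemZb]; exact hxc, Relation.ReflTransGen.refl⟩
        · have hc : c = !b := by cases b <;> cases c <;> simp_all
          subst hc
          by_cases h1 : Fin.snoc x b ∈ Z
          · -- counting argument
            have hex : ∃ i : Fin d, Fin.snoc (Function.update x i (!x i)) (!b) ∉ Z ∧
                Fin.snoc (Function.update x i (!x i)) b ∉ Z := by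
              by_contra hcon
              push_neg at hcon
              have hex2 : ∀ i : Fin d, ∃ z, z ∈ Z ∧ Fin.init z = Function.update x i (!x i) := by
                intro i
                by_cases h : Fin.snoc (Function.update x i (!x i)) (!b) ∈ Z
                · exact ⟨_, h, Fin.init_snoc _ _⟩
                · exact ⟨_, hcon i h, Fin.init_snoc _ _⟩
              choose f hfZ hfinit using hex2
              have hfinj : Function.Injective f := by
                intro i j h
                have h2 := congrArg Fin.init h
                rw [hfinit, hfinit] at h2
                by_contra hij
                have h3 := congrFun h2 i
                rw [Function.update_self, Function.update_of_ne hij] at h3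
                simp at h3
              have hfne : ∀ i, f i ≠ Fin.snoc x b := by
                intro i h
                have h2 := congrArg Fin.init h
                rw [hfinit, Fin.init_snoc] at h2
                have h3 := congrFun h2 i
                rw [Function.update_self] at h3
                simp at h3
              have hsub : insert (Fin.snoc x b) (Finset.univ.image f) ⊆ Z := by
                intro z hz
                rcases Finset.mem_insert.mp hz with rfl | hz
                · exact h1
                · obtain ⟨i, _, rfl⟩ := Finset.mem_image.mp hz
                  exact hfZ i
              have hcard : (insert (Fin.snoc x b) (Finset.univ.image f)).card = d + 1 := by
                rw [Finset.card_insert_of_notMem (by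
                  intro h
                  obtain ⟨i, _, hi⟩ := Finset.mem_image.mp h
                  exact hfne i hi),
                  Finset.card_image_of_injective _ hfinj, Finset.card_univ, Fintype.card_fin]
              have := Finset.card_le_card hsub
              omega
            obtain ⟨i, hi1, hi2⟩ := hex
            refine ⟨Function.update x i (!x i), by rw [hmemZb]; exact hi2, ?_⟩
            refine Relation.ReflTransGen.head ⟨hxc, hi1, snoc_adj (!b) (adj_update x i)⟩ ?_
            refine Relation.ReflTransGen.single ⟨hi1, hi2, ?_⟩
            have h := snoc_adj_last (Function.update x i (!x i)) (!b)
            rwa [Bool.not_not] at h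
          · refine ⟨x, by rw [hmemZb]; exact h1, Relation.ReflTransGen.single ⟨hxc, h1, ?_⟩⟩
            have h := snoc_adj_last x (!b)
            rwa [Bool.not_not] at h
      -- combine
      have hv' : Fin.snoc (Fin.init v) (v (Fin.last d)) ∉ Z := by rw [Fin.snoc_init_self]; exact hv
      have hw' : Fin.snoc (Fin.init w) (w (Fin.last d)) ∉ Z := by rw [Fin.snoc_init_self]; exact hw
      obtain ⟨y, hy, pv⟩ := reach (Fin.init v) (v (Fin.last d)) hv'
      obtain ⟨y', hy', pw⟩ := reach (Fin.init w) (w (Fin.last d)) hw'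
      rw [Fin.snoc_init_self] at pv pw
      have pmid : Relation.ReflTransGen
          (fun a b' => a ∉ Z ∧ b' ∉ Z ∧ (cube (d+1)).Adj a b') (Fin.snoc y b) (Fin.snoc y' b) := by
        refine Relation.ReflTransGen.lift
          (fun z : Fin d → Bool => (Fin.snoc z b : Fin (d+1) → Bool)) ?_ _ _ (ih hd (Zb b) hb y hy y' hy')
        rintro a a' ⟨ha, ha', hadj⟩
        exact ⟨fun h => ha ((hmemZb b a).mpr h), fun h => ha' ((hmemZb b a').mpr h), snoc_adj b hadj⟩
      have hsymm : Symmetric (fun a b' => a ∉ Z ∧ b' ∉ Z ∧ (cube (d+1)).Adj a b') := by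
        rintro a a' ⟨ha, ha', hadj⟩; exact ⟨ha', ha, hadj.symm⟩
      exact (pv.trans pmid).trans ((@Relation.ReflTransGen.stdSymm _ _ ⟨fun _ _ h => hsymm h⟩).symm _ _ pw)

/-- The hypercube `Q_d` is `d`-vertex-connected: for `d ≥ 1`, deleting
any set of at most `d-1` vertices leaves a nonempty connected graph. -/
theorem stmt18 (d : ℕ) (hd : 1 ≤ d) (Z : Finset (Fin d → Bool))
    (hZ : Z.card ≤ d - 1) :
    (Finset.univ \ Z).Nonempty ∧
      ∀ v ∈ Finset.univ \ Z, ∀ w ∈ Finset.univ \ Z,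
        Relation.ReflTransGen
          (fun a b => a ∈ Finset.univ \ Z ∧ b ∈ Finset.univ \ Z ∧ (cube d).Adj a b)
          v w := by
  have hZ' : ∀ u ∈ Finset.univ \ Z, u ∉ Z := fun u hu => (Finset.mem_sdiff.mp hu).2
  constructor
  · apply Finset.card_pos.mp
    rw [Finset.card_sdiff_of_subset (Finset.subset_univ Z), Finset.card_univ]
    have h2 : Fintype.card (Fin d → Bool) = 2 ^ d := by simp
    have h3 := Nat.lt_two_pow_self (n := d)
    omega
  · intro v hv w hw
    refine Relation.ReflTransGen.mono ?_ _ _ (cube_key d hd Z hZ v (hZ' v hv) w (hZ' w hw))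
    rintro a b ⟨ha, hb, hadj⟩
    exact ⟨Finset.mem_sdiff.mpr ⟨Finset.mem_univ a, ha⟩,
      Finset.mem_sdiff.mpr ⟨Finset.mem_univ b, hb⟩, hadj⟩
end
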